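/- Under the continuous-time weighted-average consensus dynamics ẋ_i(t) = (1/w_i)·Σ_{j ∈ N_i} a_ij(t)·(x_j(t) − x_i(t)), with positive node weights w_i and symmetric time-varying coupling weights uniformly bounded above and below by positive constants on every edge, every node's state converges as t → ∞ to the weighted average of the initial states: lim_{t→∞} x_i(t) = (Σ_{j=1}^n w_j x_j(0)) / (Σ_{j=1}^n w_j) for every node i. -/

import Mathlib

open Filter Topology

section ConsensusHelpers

open Finset

/-- A sum over all directed edges of an antisymmetric function vanishes. -/
lemma sum_neighbor_antisymm {n : ℕ} (G : SimpleGraph (Fin n)) [DecidableRel G.Adj]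
    (f : Fin n → Fin n → ℝ) (hf : ∀ i j, G.Adj i j → f i j = - f j i) :
    ∑ i, ∑ j ∈ G.neighborFinset i, f i j = 0 := by
  have key : ∑ i, ∑ j ∈ G.neighborFinset i, f i j
      = ∑ i, ∑ j, if G.Adj i j then f i j else 0 := by
    refine Finset.sum_congr rfl fun i _ => ?_
    rw [SimpleGraph.neighborFinset_eq_filter, Finset.sum_filter]
  have h1 : (∑ i, ∑ j, if G.Adj i j then f i j else 0)
      = - ∑ i, ∑ j, if G.Adj i j then f i j else 0 := by
    conv_lhs => rw [Finset.sum_comm]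
    rw [← Finset.sum_neg_distrib]
    refine Finset.sum_congr rfl fun k _ => ?_
    rw [← Finset.sum_neg_distrib]
    refine Finset.sum_congr rfl fun l _ => ?_
    by_cases h : G.Adj l k
    · simp [h, G.adj_symm h, hf l k h]
    · have h2 : ¬ G.Adj k l := fun h' => h (G.adj_symm h')
      simp [h, h2]
  rw [key]; linarith

/-- A function constant along edges is constant along reachability. -/
lemma reachable_const {n : ℕ} (G : SimpleGraph (Fin n)) (v : Fin n → ℝ)
    (h : ∀ i j, G.Adj i j → v i = v j) {i j : Fin n} (hr : G.Reachable i j) :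
    v i = v j := by
  obtain ⟨p⟩ := hr
  induction p with
  | nil => rfl
  | cons hadj p ih => exact (h _ _ hadj).trans ih

/-- A weighted Poincaré-type inequality (spectral gap) for a connected graph. -/
lemma poincare {n : ℕ} (G : SimpleGraph (Fin n)) [DecidableRel G.Adj]
    (hconn : G.Connected) (w : Fin n → ℝ) (hw : ∀ i, 0 < w i) :
    ∃ lam > 0, ∀ v : Fin n → ℝ, (∑ i, w i * v i) = 0 →
      lam * ∑ i, w i * (v i)^2 ≤ ∑ i, ∑ j ∈ G.neighborFinset i, (v j - v i)^2 := by
  classical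
  set Q : (Fin n → ℝ) → ℝ := fun v => ∑ i, ∑ j ∈ G.neighborFinset i, (v j - v i)^2 with hQ
  have hQ0 : ∀ v, 0 ≤ Q v := fun v =>
    Finset.sum_nonneg fun i _ => Finset.sum_nonneg fun j _ => sq_nonneg _
  have hQcont : Continuous Q := by
    apply continuous_finset_sum
    intro i _
    apply continuous_finset_sum
    intro j _
    exact ((continuous_apply j).sub (continuous_apply i)).pow 2
  set K : Set (Fin n → ℝ) := {v | (∑ i, w i * v i) = 0 ∧ (∑ i, w i * (v i)^2) = 1} with hK
  have hKc : IsCompact K := by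
    have hclosed : IsClosed K := by
      have h1 : Continuous fun v : Fin n → ℝ => ∑ i, w i * v i :=
        continuous_finset_sum _ fun i _ => (continuous_const.mul (continuous_apply i))
      have h2 : Continuous fun v : Fin n → ℝ => ∑ i, w i * (v i)^2 :=
        continuous_finset_sum _ fun i _ => (continuous_const.mul ((continuous_apply i).pow 2))
      exact (isClosed_eq h1 continuous_const).inter (isClosed_eq h2 continuous_const)
    have hbdd : Bornology.IsBounded K := by
      rw [Metric.isBounded_iff_subset_closedBall 0]
      refine ⟨Real.sqrt (1 + ∑ i, 1 / w i), fun v hv => ?_⟩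
      rw [Metric.mem_closedBall, dist_zero_right]
      rw [pi_norm_le_iff_of_nonneg (Real.sqrt_nonneg _)]
      intro i
      rw [Real.norm_eq_abs, ← Real.sqrt_sq_eq_abs]
      apply Real.sqrt_le_sqrt
      have hterm : w i * (v i)^2 ≤ 1 := by
        rw [← hv.2]
        exact Finset.single_le_sum (fun j _ => mul_nonneg (hw j).le (sq_nonneg _)) (mem_univ i)
      have : (v i)^2 ≤ 1 / w i := by
        rw [le_div_iff₀ (hw i)]; linarith [mul_comm (w i) ((v i)^2)]
      have h1w : 1 / w i ≤ 1 + ∑ j, 1 / w j := by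
        have := Finset.single_le_sum (f := fun j => 1 / w j)
          (fun j _ => one_div_nonneg.mpr (hw j).le) (mem_univ i)
        linarith
      linarith
    exact Metric.isCompact_of_isClosed_isBounded hclosed hbdd
  have hQpos : ∀ v ∈ K, 0 < Q v := by
    intro v hv
    rcases lt_or_eq_of_le (hQ0 v) with h | h
    · exact h
    exfalso
    have hzero : ∀ i ∈ (univ : Finset (Fin n)), ∑ j ∈ G.neighborFinset i, (v j - v i)^2 = 0 := by
      rw [← Finset.sum_eq_zero_iff_of_nonneg
        (fun i _ => Finset.sum_nonneg fun j _ => sq_nonneg _)]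
      exact h.symm
    have hadj : ∀ i j, G.Adj i j → v i = v j := by
      intro i j hij
      have := (Finset.sum_eq_zero_iff_of_nonneg (fun j _ => sq_nonneg (v j - v i))).mp
        (hzero i (mem_univ i)) j (by rwa [SimpleGraph.mem_neighborFinset])
      have := sq_eq_zero_iff.mp this
      linarith
    obtain ⟨i0⟩ := hconn.nonempty
    have hconst : ∀ i, v i = v i0 := fun i => reachable_const G v hadj (hconn i i0)
    have hsum : (∑ i, w i * v i) = (∑ i, w i) * v i0 := by
      rw [Finset.sum_mul]
      exact Finset.sum_congr rfl fun i _ => by rw [hconst i]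
    have hwpos : 0 < ∑ i, w i := Finset.sum_pos (fun i _ => hw i) ⟨i0, mem_univ i0⟩
    have hv0 : v i0 = 0 := by
      have := hv.1; rw [hsum] at this
      exact (mul_eq_zero.mp this).resolve_left (ne_of_gt hwpos)
    have : (∑ i, w i * (v i)^2) = 0 := by
      apply Finset.sum_eq_zero
      intro i _
      rw [hconst i, hv0]; ring
    rw [hv.2] at this; norm_num at this
  have scale : ∀ lam > 0, (∀ v ∈ K, lam ≤ Q v) → ∀ v : Fin n → ℝ, (∑ i, w i * v i) = 0 →
      lam * ∑ i, w i * (v i)^2 ≤ Q v := by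
    intro lam hlam hmin v hv
    by_cases hc : (∑ i, w i * (v i)^2) = 0
    · rw [hc, mul_zero]; exact hQ0 v
    have hcpos : 0 < ∑ i, w i * (v i)^2 := by
      rcases lt_or_eq_of_le (Finset.sum_nonneg fun i _ => mul_nonneg (hw i).le (sq_nonneg _))
        with h | h
      · exact h
      · exact absurd h.symm hc
    set c := ∑ i, w i * (v i)^2 with hcdef
    set r := Real.sqrt c with hr
    have hrpos : 0 < r := Real.sqrt_pos.mpr hcpos
    have hr2 : r^2 = c := Real.sq_sqrt hcpos.le
    set u : Fin n → ℝ := fun i => v i / r with hu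
    have huK : u ∈ K := by
      constructor
      · simp only [hu, div_eq_mul_inv, ← mul_assoc, ← Finset.sum_mul]
        rw [hv]; ring
      · have : (∑ i, w i * (u i)^2) = (∑ i, w i * (v i)^2) / r^2 := by
          rw [Finset.sum_div]
          refine Finset.sum_congr rfl fun i _ => by
            simp only [hu]; field_simp
        rw [this, hr2]
        field_simp
        exact hcdef.symm
    have hQu : Q u = Q v / r^2 := by
      simp only [hQ]
      rw [Finset.sum_div]
      refine Finset.sum_congr rfl fun i _ => ?_
      rw [Finset.sum_div]
      refine Finset.sum_congr rfl fun j _ => ?_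
      simp only [hu, div_sub_div_same, div_pow]
    have := hmin u huK
    rw [hQu, le_div_iff₀ (by positivity)] at this
    rw [hr2] at this
    linarith [this]
  by_cases hKne : K.Nonempty
  · obtain ⟨v0, hv0K, hv0min⟩ := hKc.exists_isMinOn hKne hQcont.continuousOn
    have hv0min' : ∀ v ∈ K, Q v0 ≤ Q v := fun v hv => hv0min hv
    exact ⟨Q v0, hQpos v0 hv0K, scale (Q v0) (hQpos v0 hv0K) hv0min'⟩
  · refine ⟨1, one_pos, scale 1 one_pos ?_⟩
    intro v hvK
    exact absurd ⟨v, hvK⟩ hKne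

end ConsensusHelpers

open Finset in
/-- Continuous-time weighted-average consensus with positive node weights and
symmetric, uniformly bounded, time-varying coupling weights: every node's
state converges to the weighted average of the initial states. -/
theorem ct_weighted_average_consensus
    (n : ℕ) (hn : 2 ≤ n)
    (G : SimpleGraph (Fin n)) [DecidableRel G.Adj]
    (hconn : G.Connected)
    (w : Fin n → ℝ) (hw : ∀ i, 0 < w i)
    (x : ℝ → Fin n → ℝ)
    (a : Fin n → Fin n → ℝ → ℝ)
    (ha_cont : ∀ i j, Continuous (a i j))
    (ha_symm : ∀ i j t, a i j t = a j i t)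
    (δ abar : ℝ) (hδ : 0 < δ) (hδa : δ ≤ abar)
    (hbound : ∀ i j, G.Adj i j → ∀ t : ℝ, 0 ≤ t →
      δ ≤ a i j t ∧ a i j t ≤ abar)
    (hdyn : ∀ i, ∀ t : ℝ, 0 ≤ t →
      HasDerivAt (fun s => x s i)
        ((1 / w i) * ∑ j ∈ G.neighborFinset i, a i j t * (x t j - x t i)) t) :
    ∀ i, Tendsto (fun t => x t i) atTop
      (𝓝 ((∑ j, w j * x 0 j) / (∑ j, w j))) := by
  classical
  have hwne : ∀ i, w i ≠ 0 := fun i => (hw i).ne'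
  have hswpos : 0 < ∑ j, w j :=
    Finset.sum_pos (fun i _ => hw i) ⟨⟨0, by omega⟩, mem_univ _⟩
  obtain ⟨lam, hlam, hpoin⟩ := poincare G hconn w hw
  set c : ℝ := (∑ j, w j * x 0 j) / (∑ j, w j) with hc
  -- conservation of the weighted sum
  set S : ℝ → ℝ := fun t => ∑ i, w i * x t i with hSdef
  have hS' : ∀ t : ℝ, 0 ≤ t → HasDerivAt S 0 t := by
    intro t ht
    have h := HasDerivAt.fun_sum (fun i (_ : i ∈ (univ : Finset (Fin n))) =>
      ((hdyn i t ht).const_mul (w i)))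
    have hval : (∑ i, w i * ((1 / w i) * ∑ j ∈ G.neighborFinset i, a i j t * (x t j - x t i)))
        = 0 := by
      have : (∑ i, w i * ((1 / w i) * ∑ j ∈ G.neighborFinset i, a i j t * (x t j - x t i)))
          = ∑ i, ∑ j ∈ G.neighborFinset i, a i j t * (x t j - x t i) := by
        refine Finset.sum_congr rfl fun i _ => ?_
        field_simp
        exact mul_div_cancel_left₀ _ (hwne i)
      rw [this]
      apply sum_neighbor_antisymm
      intro i j hij
      rw [ha_symm i j t]
      ring
    rw [hval] at h
    exact h
  have hSconst : ∀ t : ℝ, 0 ≤ t → S t = S 0 := by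
    intro T hT
    have hcont : ContinuousOn S (Set.Icc 0 T) := fun t ht =>
      ((hS' t ht.1).continuousAt).continuousWithinAt
    have hderiv : ∀ t ∈ Set.Ico (0:ℝ) T, HasDerivWithinAt S 0 (Set.Ici t) t :=
      fun t ht => ((hS' t ht.1).hasDerivWithinAt)
    exact constant_of_has_deriv_right_zero hcont hderiv T ⟨hT, le_refl T⟩
  have hmean : ∀ t : ℝ, 0 ≤ t → ∑ i, w i * (x t i - c) = 0 := by
    intro t ht
    have : ∑ i, w i * (x t i - c) = S t - (∑ i, w i) * c := by
      rw [hSdef]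
      simp only [mul_sub, Finset.sum_sub_distrib, Finset.sum_mul]
    rw [this, hSconst t ht, hSdef]
    simp only [hc]
    field_simp
    ring
  clear_value c
  -- the Lyapunov function and its dissipation
  set V : ℝ → ℝ := fun t => ∑ i, w i * (x t i - c)^2 with hVdef
  set D : ℝ → ℝ := fun t => ∑ i,
    2 * (x t i - c) * (∑ j ∈ G.neighborFinset i, a i j t * (x t j - x t i)) with hDdef
  have hVnonneg : ∀ t, 0 ≤ V t := fun t =>
    Finset.sum_nonneg fun i _ => mul_nonneg (hw i).le (sq_nonneg _)
  have hV' : ∀ t : ℝ, 0 ≤ t → HasDerivAt V (D t) t := by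
    intro t ht
    have h := HasDerivAt.fun_sum (fun i (_ : i ∈ (univ : Finset (Fin n))) =>
      ((((hdyn i t ht).sub_const c).pow 2).const_mul (w i)))
    refine h.congr_deriv (Eq.symm ?_)
    refine Finset.sum_congr rfl fun i _ => ?_
    generalize (∑ j ∈ G.neighborFinset i, a i j t * (x t j - x t i)) = B
    have hwi := hwne i
    push_cast
    field_simp
  have hDle : ∀ t : ℝ, 0 ≤ t → D t ≤ -(δ * lam) * V t := by
    intro t ht
    have hexp : D t = (∑ i, ∑ j ∈ G.neighborFinset i,
        (a i j t * ((x t i - c) + (x t j - c)) * (x t j - x t i)))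
        + (∑ i, ∑ j ∈ G.neighborFinset i, (-(a i j t * (x t j - x t i)^2))) := by
      rw [hDdef, ← Finset.sum_add_distrib]
      refine Finset.sum_congr rfl fun i _ => ?_
      rw [Finset.mul_sum, ← Finset.sum_add_distrib]
      refine Finset.sum_congr rfl fun j _ => ?_
      ring
    have hzero : (∑ i, ∑ j ∈ G.neighborFinset i,
        (a i j t * ((x t i - c) + (x t j - c)) * (x t j - x t i))) = 0 := by
      apply sum_neighbor_antisymm
      intro i j hij
      rw [ha_symm i j t]
      ring
    have hDe : D t = - ∑ i, ∑ j ∈ G.neighborFinset i, a i j t * (x t j - x t i)^2 := by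
      rw [hexp, hzero, zero_add]
      simp only [Finset.sum_neg_distrib]
    have hstep1 : δ * ∑ i, ∑ j ∈ G.neighborFinset i, (x t j - x t i)^2
        ≤ ∑ i, ∑ j ∈ G.neighborFinset i, a i j t * (x t j - x t i)^2 := by
      rw [Finset.mul_sum]
      refine Finset.sum_le_sum fun i _ => ?_
      rw [Finset.mul_sum]
      refine Finset.sum_le_sum fun j hj => ?_
      have hadj : G.Adj i j := (SimpleGraph.mem_neighborFinset _ _ _).mp hj
      exact mul_le_mul_of_nonneg_right ((hbound i j hadj t ht).1) (sq_nonneg _)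
    have h2 := hpoin (fun i => x t i - c) (hmean t ht)
    have hrw : (∑ i, ∑ j ∈ G.neighborFinset i,
          (((fun i => x t i - c) j) - ((fun i => x t i - c) i))^2)
        = ∑ i, ∑ j ∈ G.neighborFinset i, (x t j - x t i)^2 :=
      Finset.sum_congr rfl fun i _ => Finset.sum_congr rfl fun j _ => by ring
    rw [hrw] at h2
    have h3 : δ * (lam * V t) ≤ δ * ∑ i, ∑ j ∈ G.neighborFinset i, (x t j - x t i)^2 :=
      mul_le_mul_of_nonneg_left h2 hδ.le
    rw [hDe]
    nlinarith [h3, hstep1]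
  -- exponential decay of the Lyapunov function
  set k : ℝ := δ * lam with hk
  have hkpos : 0 < k := mul_pos hδ hlam
  set g : ℝ → ℝ := fun t => V t * Real.exp (k * t) with hg
  have hg' : ∀ t : ℝ, 0 ≤ t →
      HasDerivAt g ((D t + k * V t) * Real.exp (k * t)) t := by
    intro t ht
    have he : HasDerivAt (fun s : ℝ => Real.exp (k * s)) (Real.exp (k * t) * (k * 1)) t :=
      HasDerivAt.exp ((hasDerivAt_id t).const_mul k)
    have := (hV' t ht).fun_mul he
    refine this.congr_deriv (Eq.symm ?_)
    ring
  have hganti : AntitoneOn g (Set.Ici (0:ℝ)) := by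
    apply antitoneOn_of_deriv_nonpos (convex_Ici 0)
    · exact fun t ht => ((hg' t ht).continuousAt).continuousWithinAt
    · rw [interior_Ici]
      exact fun t ht => ((hg' t (le_of_lt ht)).differentiableAt).differentiableWithinAt
    · rw [interior_Ici]
      intro t ht
      rw [(hg' t ht.le).deriv]
      have h1 := hDle t ht.le
      have h2 : D t + k * V t ≤ 0 := by linarith
      nlinarith [Real.exp_pos (k * t), h2]
  have hdecay : ∀ t : ℝ, 0 ≤ t → V t ≤ V 0 * Real.exp (-(k * t)) := by
    intro t ht
    have h := hganti (Set.self_mem_Ici) ht ht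
    have h0 : g 0 = V 0 := by simp [hg]
    rw [h0] at h
    have hgt : g t = V t * Real.exp (k * t) := rfl
    rw [hgt] at h
    rw [Real.exp_neg, mul_comm (V 0), inv_mul_eq_div, le_div_iff₀ (Real.exp_pos _)]
    linarith
  have hVto : Tendsto V atTop (𝓝 0) := by
    have hub : Tendsto (fun t => V 0 * Real.exp (-(k * t))) atTop (𝓝 0) := by
      have h1 : Tendsto (fun t : ℝ => k * t) atTop atTop :=
        Tendsto.const_mul_atTop hkpos tendsto_id
      have h2 : Tendsto (fun t : ℝ => Real.exp (-(k * t))) atTop (𝓝 0) :=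
        Real.tendsto_exp_neg_atTop_nhds_zero.comp h1
      simpa using h2.const_mul (V 0)
    apply squeeze_zero' (Filter.Eventually.of_forall hVnonneg)
      (eventually_atTop.mpr ⟨0, fun t ht => hdecay t ht⟩) hub
  -- conclusion
  intro i
  rw [tendsto_iff_dist_tendsto_zero]
  have hsq : Tendsto (fun t => Real.sqrt (V t / w i)) atTop (𝓝 0) := by
    have h1 : Tendsto (fun t => V t / w i) atTop (𝓝 0) := by
      simpa using hVto.div_const (w i)
    have := (Real.continuous_sqrt.tendsto 0).comp h1
    simpa using (by exact this : Tendsto (fun t => Real.sqrt (V t / w i)) atTop (𝓝 (Real.sqrt 0)))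
  apply squeeze_zero' (Filter.Eventually.of_forall fun t => dist_nonneg)
    (eventually_atTop.mpr ⟨0, fun t ht => ?_⟩) hsq
  rw [Real.dist_eq, ← Real.sqrt_sq_eq_abs]
  apply Real.sqrt_le_sqrt
  rw [le_div_iff₀ (hw i), mul_comm]
  exact Finset.single_le_sum (f := fun i => w i * (x t i - c)^2)
    (fun j _ => mul_nonneg (hw j).le (sq_nonneg _)) (mem_univ i)
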